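/- arXiv:1602.08201 — 4 statements merged into one kernel-verified Lean document; each statement's English description precedes it below -/
import Mathlib

section
/- Under the hypotheses of the previous setting, if (1−c)·Vol(Δ⁻) < ∫_{Δ⁻} (1−θ)² dx, then there exists a simple piecewise linear convex function u on Δ (namely u = max{θ−1,0}) with L(u) < 0. -/
open MeasureTheory


-- the linear functional x ↦ ∑ a i * x i as a continuous linear map
noncomputable def Lmap (n : ℕ) (a : Fin n → ℝ) : (Fin n → ℝ) →L[ℝ] ℝ :=
  ∑ i, a i • (ContinuousLinearMap.proj i : (Fin n → ℝ) →L[ℝ] ℝ)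

lemma Lmap_apply (n : ℕ) (a : Fin n → ℝ) (x : Fin n → ℝ) :
    Lmap n a x = ∑ i, a i * x i := by
  simp [Lmap, ContinuousLinearMap.sum_apply]

lemma hasFDerivAt_theta (n : ℕ) (a : Fin n → ℝ) (c : ℝ) (x : Fin n → ℝ) :
    HasFDerivAt (fun y : Fin n → ℝ => ∑ i, a i * y i + c) (Lmap n a) x := by
  have h1 : HasFDerivAt (fun y : Fin n → ℝ => Lmap n a y) (Lmap n a) x :=
    (Lmap n a).hasFDerivAt
  have h2 : (fun y : Fin n → ℝ => ∑ i, a i * y i + c)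
      = fun y => Lmap n a y + c := by
    funext y; rw [Lmap_apply]
  rw [h2]
  exact h1.add_const c

lemma Lmap_single (n : ℕ) (a : Fin n → ℝ) (i : Fin n) :
    Lmap n a (Pi.single i 1) = a i := by
  rw [Lmap_apply]
  rw [Finset.sum_eq_single i]
  · simp
  · intro j _ hj; simp [Pi.single_apply, hj]
  · simp


/-- destabilizing simple piecewise linear function when
(1−c)·Vol(Δ⁻) < ∫_{Δ⁻}(1−θ)². -/
theorem stmt2 (n : ℕ) (Δ : Set (Fin n → ℝ)) (hconv : Convex ℝ Δ) (hcomp : IsCompact Δ)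
    (h0 : (0 : Fin n → ℝ) ∈ interior Δ)
    (a : Fin n → ℝ) (c : ℝ)
    (θ : (Fin n → ℝ) → ℝ) (hθ : ∀ x, θ x = ∑ i, a i * x i + c)
    (hnorm : ∫ x in Δ, θ x = 0)
    (Δm : Set (Fin n → ℝ)) (hΔm : Δm = {x ∈ Δ | θ x > 1})
    (hpos : 0 < volume Δm)
    (hineq : (1 - c) * (volume Δm).toReal < ∫ x in Δm, (1 - θ x) ^ 2) :
    ∃ u : (Fin n → ℝ) → ℝ, (∀ x, u x = max (θ x - 1) 0) ∧
      ∫ x in Δ, (((∑ i, x i * fderiv ℝ u x (Pi.single i 1)) - u x) + (1 - θ x) * u x) < 0 := by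
  -- θ as a function, continuity
  have hθfun : θ = fun x => ∑ i, a i * x i + c := funext hθ
  have hθcont : Continuous θ := by
    rw [hθfun]
    exact (continuous_finset_sum _ fun i _ => continuous_const.mul (continuous_apply i)).add
      continuous_const
  have hΔclosed : IsClosed Δ := hcomp.isClosed
  have hΔmeas : MeasurableSet Δ := hΔclosed.measurableSet
  have hΔmmeas : MeasurableSet Δm := by
    rw [hΔm]
    exact hΔmeas.inter (measurableSet_lt measurable_const hθcont.measurable)
  have hΔmsub : Δm ⊆ Δ := by rw [hΔm]; exact fun x hx => hx.1
  have hΔfin : volume Δ < ⊤ := hcomp.measure_lt_top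
  have hΔmfin : volume Δm < ⊤ := lt_of_le_of_lt (measure_mono hΔmsub) hΔfin
  -- a ≠ 0
  have hvolΔ : 0 < volume Δ :=
    lt_of_lt_of_le (isOpen_interior.measure_pos volume ⟨0, h0⟩)
      (measure_mono interior_subset)
  have ha : a ≠ 0 := by
    intro ha0
    have hθc : ∀ x, θ x = c := by intro x; simp [hθ x, ha0]
    have hc1 : 1 < c := by
      rcases (nonempty_of_measure_ne_zero hpos.ne') with ⟨x, hx⟩
      rw [hΔm] at hx
      have := hx.2
      rwa [hθc x] at this
    have : ∫ x in Δ, θ x = c * (volume Δ).toReal := by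
      have : (fun x => θ x) = fun _ => c := funext hθc
      rw [this, setIntegral_const, smul_eq_mul, mul_comm]; rfl
    rw [hnorm] at this
    have hvpos : 0 < (volume Δ).toReal := ENNReal.toReal_pos hvolΔ.ne' hΔfin.ne
    nlinarith
  obtain ⟨j, hj'⟩ := Function.ne_iff.mp ha
  have hj : a j ≠ 0 := by simpa using hj'
  -- the level set {θ = 1} has measure zero
  have hlevel : volume {x : Fin n → ℝ | θ x = 1} = 0 := by
    set x₀ : Fin n → ℝ := ((1 - c) / a j) • (Pi.single j 1 : Fin n → ℝ) with hx₀
    have hfx₀ : Lmap n a x₀ = 1 - c := by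
      rw [hx₀, _root_.map_smul, Lmap_single, smul_eq_mul, div_mul_cancel₀ _ hj]
    have hset : {x : Fin n → ℝ | θ x = 1}
        = ↑(AffineSubspace.mk' x₀ (LinearMap.ker (Lmap n a : (Fin n → ℝ) →ₗ[ℝ] ℝ))) := by
      ext x
      simp only [Set.mem_setOf_eq, SetLike.mem_coe, AffineSubspace.mem_mk',
        LinearMap.mem_ker, vsub_eq_sub]
      rw [hθ x, ← Lmap_apply]
      constructor
      · intro h
        simp only [ContinuousLinearMap.coe_coe, map_sub, hfx₀]
        linarith
      · intro h
        simp only [ContinuousLinearMap.coe_coe, map_sub, hfx₀] at h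
        linarith
    rw [hset]
    apply Measure.addHaar_affineSubspace
    intro htop
    have : LinearMap.ker (Lmap n a : (Fin n → ℝ) →ₗ[ℝ] ℝ) = ⊤ := by
      have := congrArg AffineSubspace.direction htop
      rwa [AffineSubspace.direction_mk', AffineSubspace.direction_top] at this
    have : Lmap n a (Pi.single j 1) = 0 := by
      have := LinearMap.ker_eq_top.mp this
      exact congrFun (congrArg DFunLike.coe (by exact_mod_cast this)) _
    rw [Lmap_single] at this
    exact hj this
  -- the function u
  set u : (Fin n → ℝ) → ℝ := fun x => max (θ x - 1) 0 with hu
  refine ⟨u, fun x => rfl, ?_⟩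
  set g : (Fin n → ℝ) → ℝ := fun x => (1 - c) - (1 - θ x) ^ 2 with hg
  -- pointwise computation on θ > 1
  have hgt : ∀ x, 1 < θ x →
      (((∑ i, x i * fderiv ℝ u x (Pi.single i 1)) - u x) + (1 - θ x) * u x) = g x := by
    intro x hx
    have hopen : IsOpen {y | 1 < θ y} := isOpen_lt continuous_const hθcont
    have hev : u =ᶠ[nhds x] fun y => θ y - 1 := by
      filter_upwards [hopen.mem_nhds hx] with y hy
      simp only [hu]
      exact max_eq_left (by linarith)
    have hder : HasFDerivAt (fun y => θ y - 1) (Lmap n a) x := by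
      have : (fun y => θ y - 1) = fun y : Fin n → ℝ => ∑ i, a i * y i + (c - 1) := by
        funext y; rw [hθ y]; ring
      rw [this]
      exact hasFDerivAt_theta n a (c - 1) x
    have hfd : fderiv ℝ u x = Lmap n a := by
      rw [hev.fderiv_eq]; exact hder.fderiv
    have hux : u x = θ x - 1 := by
      simp [hu, max_eq_left (by linarith : (0:ℝ) ≤ θ x - 1)]
    have hsum : (∑ i, x i * fderiv ℝ u x (Pi.single i 1)) = θ x - c := by
      rw [hfd]
      simp only [Lmap_single]
      rw [hθ x]
      rw [Finset.sum_congr rfl fun i _ => mul_comm (x i) (a i)]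
      ring
    rw [hsum, hux, hg]
    ring
  -- pointwise computation on θ < 1
  have hlt : ∀ x, θ x < 1 →
      (((∑ i, x i * fderiv ℝ u x (Pi.single i 1)) - u x) + (1 - θ x) * u x) = 0 := by
    intro x hx
    have hopen : IsOpen {y | θ y < 1} := isOpen_lt hθcont continuous_const
    have hev : u =ᶠ[nhds x] fun _ => (0:ℝ) := by
      filter_upwards [hopen.mem_nhds hx] with y hy
      simp only [hu]
      exact max_eq_right (by linarith)
    have hfd : fderiv ℝ u x = 0 := by
      rw [hev.fderiv_eq]; exact fderiv_const_apply 0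
    have hux : u x = 0 := by
      simp [hu, max_eq_right (by linarith : θ x - 1 ≤ 0)]
    rw [hfd, hux]
    simp
  -- rewrite the integral
  have hae : ∀ᵐ x ∂volume, x ∈ Δ →
      (((∑ i, x i * fderiv ℝ u x (Pi.single i 1)) - u x) + (1 - θ x) * u x)
        = Δm.indicator g x := by
    have hne1 : ∀ᵐ x ∂volume, θ x ≠ 1 := by
      rw [ae_iff]
      simpa using hlevel
    filter_upwards [hne1] with x hx hxΔ
    rcases lt_trichotomy (θ x) 1 with h | h | h
    · rw [hlt x h, Set.indicator_of_notMem]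
      rw [hΔm]
      intro hmem
      exact absurd hmem.2 (not_lt.mpr h.le)
    · exact absurd h hx
    · rw [hgt x h, Set.indicator_of_mem]
      rw [hΔm]; exact ⟨hxΔ, h⟩
  have hstep1 : ∫ x in Δ, (((∑ i, x i * fderiv ℝ u x (Pi.single i 1)) - u x)
      + (1 - θ x) * u x) = ∫ x in Δm, g x := by
    rw [setIntegral_congr_ae hΔmeas hae, setIntegral_indicator hΔmmeas,
      Set.inter_eq_self_of_subset_right hΔmsub]
  rw [hstep1]
  -- integrability and final computation
  have hint2 : IntegrableOn (fun x => (1 - θ x) ^ 2) Δm volume := by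
    have : ContinuousOn (fun x => (1 - θ x) ^ 2) Δ :=
      ((continuous_const.sub hθcont).pow 2).continuousOn
    exact (this.integrableOn_compact hcomp).mono_set hΔmsub
  have hint1 : IntegrableOn (fun _ : Fin n → ℝ => (1 - c)) Δm volume :=
    integrableOn_const hΔmfin.ne
  have hsplit : ∫ x in Δm, g x
      = (1 - c) * (volume Δm).toReal - ∫ x in Δm, (1 - θ x) ^ 2 := by
    rw [hg]
    rw [integral_sub hint1 hint2, setIntegral_const, smul_eq_mul, mul_comm]; rfl
  rw [hsplit]
  linarith
end

section
/- Let Δ be the polytope of the previous item (moment polytope of B₂ = ℙ(O ⊕ O(1)) over ℙ²), and let θ(x) = −(70/97)x₃ − 15/97. Then ∫_Δ θ dx = 0 and θ(x) ≤ 1 for every x ∈ Δ; in particular the set {x ∈ Δ : θ(x) > 1} is empty. -/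
open MeasureTheory Set

def Tset : Set (ℝ × (ℝ × ℝ)) :=
  {p | -1 ≤ p.2.1 ∧ -1 ≤ p.2.2 ∧ -1 ≤ p.1 ∧ p.1 ≤ 1 ∧ p.2.1 + p.2.2 + p.1 ≤ 1}

lemma isClosed_Tset : IsClosed Tset := by
  unfold Tset
  simp only [Set.setOf_and]
  refine IsClosed.inter ?_ (IsClosed.inter ?_ (IsClosed.inter ?_ (IsClosed.inter ?_ ?_))) <;>
    exact isClosed_le (by fun_prop) (by fun_prop)

lemma isCompact_Tset : IsCompact Tset := by
  refine (isCompact_Icc (a := ((-1 : ℝ), ((-1 : ℝ), (-1 : ℝ))))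
      (b := ((1 : ℝ), ((3 : ℝ), (3 : ℝ))))).of_isClosed_subset isClosed_Tset ?_
  rintro ⟨c, a, b⟩ ⟨h1, h2, h3, h4, h5⟩
  simp only [Set.mem_Icc, Prod.le_def]
  refine ⟨⟨h3, h1, h2⟩, h4, by linarith, by linarith⟩

def Sc (c : ℝ) : Set (ℝ × ℝ) := {q | -1 ≤ q.1 ∧ -1 ≤ q.2 ∧ q.1 + q.2 ≤ 1 - c}

lemma isClosed_Sc (c : ℝ) : IsClosed (Sc c) := by
  unfold Sc
  simp only [Set.setOf_and]
  refine IsClosed.inter ?_ (IsClosed.inter ?_ ?_) <;> exact isClosed_le (by fun_prop) (by fun_prop)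

lemma isCompact_Sc (c : ℝ) (hc : -1 ≤ c) : IsCompact (Sc c) := by
  refine (isCompact_Icc (a := ((-1 : ℝ), (-1 : ℝ))) (b := ((3 : ℝ), (3 : ℝ)))).of_isClosed_subset
    (isClosed_Sc c) ?_
  rintro ⟨a, b⟩ ⟨h1, h2, h3⟩
  simp only [Set.mem_Icc, Prod.le_def]
  exact ⟨⟨h1, h2⟩, by linarith, by linarith⟩

lemma integrable_ind : Integrable (Tset.indicator fun p : ℝ × (ℝ × ℝ) =>
    -(70/97) * p.1 - 15/97) := by
  rw [integrable_indicator_iff isClosed_Tset.measurableSet]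
  exact ContinuousOn.integrableOn_compact isCompact_Tset (by fun_prop)

lemma integrable_ind2 (c k : ℝ) (hc : -1 ≤ c) :
    Integrable ((Sc c).indicator fun _ : ℝ × ℝ => k) := by
  rw [integrable_indicator_iff (isClosed_Sc c).measurableSet]
  exact ContinuousOn.integrableOn_compact (isCompact_Sc c hc) (by fun_prop)

lemma innermost (k c a : ℝ) :
    ∫ b, ({q : ℝ×ℝ | -1 ≤ q.1 ∧ -1 ≤ q.2 ∧ q.1 + q.2 ≤ 1 - c}.indicator (fun _ => k)) (a, b)
      = (Set.Icc (-1:ℝ) (2-c)).indicator (fun a => k * (2-c-a)) a := by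
  by_cases ha : -1 ≤ a
  · have h1 : (fun b => ({q : ℝ×ℝ | -1 ≤ q.1 ∧ -1 ≤ q.2 ∧ q.1 + q.2 ≤ 1 - c}.indicator
        (fun _ => k)) (a, b)) = (Set.Icc (-1:ℝ) (1-c-a)).indicator (fun _ => k) := by
      funext b
      simp only [Set.indicator_apply, Set.mem_setOf_eq, Set.mem_Icc]
      congr 1
      simp only [eq_iff_iff]
      constructor
      · rintro ⟨_, h2, h3⟩; exact ⟨h2, by linarith⟩
      · rintro ⟨h2, h3⟩; exact ⟨ha, h2, by linarith⟩
    rw [h1, integral_indicator measurableSet_Icc, setIntegral_const, measureReal_def, Real.volume_Icc]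
    by_cases h2 : a ≤ 2 - c
    · rw [Set.indicator_of_mem (Set.mem_Icc.2 ⟨ha, h2⟩)]
      rw [ENNReal.toReal_ofReal (by linarith), smul_eq_mul]
      ring
    · rw [Set.indicator_of_notMem (by simp [Set.mem_Icc]; intro; linarith)]
      rw [ENNReal.ofReal_eq_zero.2 (by linarith)]
      simp
  · have h1 : (fun b => ({q : ℝ×ℝ | -1 ≤ q.1 ∧ -1 ≤ q.2 ∧ q.1 + q.2 ≤ 1 - c}.indicator
        (fun _ => k)) (a, b)) = fun _ => 0 := by
      funext b
      exact Set.indicator_of_notMem (by simp only [Set.mem_setOf_eq]; tauto) _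
    rw [h1, integral_zero, Set.indicator_of_notMem (by simp [Set.mem_Icc]; intro; linarith)]

lemma mid (k c : ℝ) (hc2 : c ≤ 1) :
    ∫ a, (Set.Icc (-1:ℝ) (2-c)).indicator (fun a => k * (2-c-a)) a = k * ((3-c)^2/2) := by
  rw [integral_indicator measurableSet_Icc, integral_Icc_eq_integral_Ioc,
    ← intervalIntegral.integral_of_le (by linarith : (-1:ℝ) ≤ 2-c)]
  have : ∀ x ∈ Set.uIcc (-1:ℝ) (2-c), k * (2-c-x) = k*(2-c) - k*x := fun x _ => by ring
  rw [intervalIntegral.integral_congr this, intervalIntegral.integral_sub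
    intervalIntegrable_const ((by fun_prop : Continuous fun x : ℝ => k * x).intervalIntegrable _ _),
    intervalIntegral.integral_const, intervalIntegral.integral_const_mul,
    integral_id, smul_eq_mul]
  ring

lemma outer : ∫ c, (Set.Icc (-1:ℝ) 1).indicator
    (fun c => (-(70/97)*c - 15/97) * ((3-c)^2/2)) c = 0 := by
  rw [integral_indicator measurableSet_Icc, integral_Icc_eq_integral_Ioc,
    ← intervalIntegral.integral_of_le (by norm_num : (-1:ℝ) ≤ 1)]
  have : ∀ x ∈ Set.uIcc (-1:ℝ) 1, (-(70/97)*x - 15/97) * ((3-x)^2/2)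
      = (-70/194)*x^3 + ((405/194)*x^2 + ((-540/194)*x + (-135/194))) := fun x _ => by ring
  rw [intervalIntegral.integral_congr this]
  rw [intervalIntegral.integral_add ((Continuous.intervalIntegrable (by continuity)) _ _) ((Continuous.intervalIntegrable (by continuity)) _ _),
    intervalIntegral.integral_add ((Continuous.intervalIntegrable (by continuity)) _ _) ((Continuous.intervalIntegrable (by continuity)) _ _),
    intervalIntegral.integral_add ((Continuous.intervalIntegrable (by continuity)) _ _) ((Continuous.intervalIntegrable (by continuity)) _ _)]
  simp only [intervalIntegral.integral_const_mul, integral_pow,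
    integral_id, intervalIntegral.integral_const]
  norm_num
  rw [intervalIntegral.integral_const_mul, integral_id]
  norm_num

lemma inner_full (c : ℝ) :
    (∫ q : ℝ × ℝ, Tset.indicator (fun p => -(70/97) * p.1 - 15/97) (c, q))
      = (Set.Icc (-1:ℝ) 1).indicator (fun c => (-(70/97)*c - 15/97) * ((3-c)^2/2)) c := by
  by_cases hc : -1 ≤ c ∧ c ≤ 1
  · obtain ⟨hc1, hc2⟩ := hc
    have e1 : (fun q : ℝ × ℝ => Tset.indicator (fun p => -(70/97) * p.1 - 15/97) (c, q))
        = (Sc c).indicator (fun _ => -(70/97)*c - 15/97) := by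
      funext q
      simp only [Set.indicator_apply, Tset, Sc, Set.mem_setOf_eq]
      by_cases hq : -1 ≤ q.1 ∧ -1 ≤ q.2 ∧ q.1 + q.2 ≤ 1 - c
      · rw [if_pos ⟨hq.1, hq.2.1, hc1, hc2, by linarith [hq.2.2]⟩, if_pos hq]
      · rw [if_neg, if_neg hq]
        intro h; exact hq ⟨h.1, h.2.1, by linarith [h.2.2.2.2]⟩
    rw [e1, Measure.volume_eq_prod, integral_prod _ ?_]
    · have e2 : ∀ a : ℝ, (∫ b, (Sc c).indicator (fun _ => -(70/97)*c - 15/97) (a, b))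
          = (Set.Icc (-1:ℝ) (2-c)).indicator (fun a => (-(70/97)*c - 15/97) * (2-c-a)) a :=
        fun a => innermost _ c a
      simp only [e2]
      rw [mid _ c hc2, Set.indicator_of_mem (Set.mem_Icc.2 ⟨hc1, hc2⟩)]
    · rw [← Measure.volume_eq_prod]; exact integrable_ind2 c _ hc1
  · push_neg at hc
    have e1 : (fun q : ℝ × ℝ => Tset.indicator (fun p => -(70/97) * p.1 - 15/97) (c, q))
        = fun _ => 0 := by
      funext q
      refine Set.indicator_of_notMem ?_ _
      simp only [Tset, Set.mem_setOf_eq]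
      rintro ⟨-, -, h3, h4, -⟩
      rcases lt_or_ge c (-1) with h | h
      · exact absurd h3 (not_le.2 h)
      · exact absurd h4 (not_le.2 (hc h))
    rw [e1, integral_zero, Set.indicator_of_notMem]
    simp only [Set.mem_Icc, not_and_or, not_le]
    rcases lt_or_ge c (-1) with h | h
    · exact Or.inl h
    · exact Or.inr (hc h)

noncomputable def Fe : ℝ × (ℝ × ℝ) ≃ᵐ (Fin 3 → ℝ) :=
  ((MeasurableEquiv.refl ℝ).prodCongr MeasurableEquiv.finTwoArrow.symm).trans
    (MeasurableEquiv.piFinSuccAbove (fun _ => ℝ) 2).symm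

lemma Fe_mp : MeasurePreserving Fe volume volume :=
  ((volume_preserving_piFinSuccAbove (fun _ : Fin 3 => ℝ) 2).symm).comp
    (MeasurePreserving.prod (MeasurePreserving.id _) (volume_preserving_finTwoArrow ℝ).symm)

lemma Fe_apply0 (p : ℝ × (ℝ × ℝ)) : Fe p 0 = p.2.1 := by
  obtain ⟨c, a, b⟩ := p
  simp [Fe, MeasurableEquiv.piFinSuccAbove, Fin.insertNthEquiv,
    MeasurableEquiv.finTwoArrow, MeasurableEquiv.prodCongr, MeasurableEquiv.piFinTwo,
    Equiv.prodCongr, piFinTwoEquiv, Fin.insertNth, Fin.succAboveCases, Fin.cons, Fin.castPred,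
    Fin.castLT]

lemma Fe_apply1 (p : ℝ × (ℝ × ℝ)) : Fe p 1 = p.2.2 := by
  obtain ⟨c, a, b⟩ := p
  simp [Fe, MeasurableEquiv.piFinSuccAbove, Fin.insertNthEquiv,
    MeasurableEquiv.finTwoArrow, MeasurableEquiv.prodCongr, MeasurableEquiv.piFinTwo,
    Equiv.prodCongr, piFinTwoEquiv, Fin.insertNth, Fin.succAboveCases]

lemma Fe_apply2 (p : ℝ × (ℝ × ℝ)) : Fe p 2 = p.1 := by
  obtain ⟨c, a, b⟩ := p
  simp [Fe, MeasurableEquiv.piFinSuccAbove, Fin.insertNthEquiv,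
    MeasurableEquiv.finTwoArrow, MeasurableEquiv.prodCongr, MeasurableEquiv.piFinTwo,
    Equiv.prodCongr, piFinTwoEquiv, Fin.insertNth, Fin.succAboveCases]

/-- θ = −(70/97)x₃ − 15/97 on the moment polytope of B₂ has zero mean and is ≤ 1. -/
theorem stmt4 (Δ : Set (Fin 3 → ℝ))
    (hΔ : Δ = {x : Fin 3 → ℝ | -1 ≤ x 0 ∧ -1 ≤ x 1 ∧ -1 ≤ x 2 ∧ x 2 ≤ 1 ∧
      x 0 + x 1 + x 2 ≤ 1})
    (θ : (Fin 3 → ℝ) → ℝ) (hθ : ∀ x, θ x = -(70 / 97) * x 2 - 15 / 97) :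
    (∫ x in Δ, θ x = 0) ∧ (∀ x ∈ Δ, θ x ≤ 1) ∧ {x ∈ Δ | θ x > 1} = ∅ := by
  subst hΔ
  refine ⟨?_, ?_, ?_⟩
  · simp only [hθ]
    rw [← Fe_mp.setIntegral_preimage_emb Fe.measurableEmbedding]
    have hpre : Fe ⁻¹' {x : Fin 3 → ℝ | -1 ≤ x 0 ∧ -1 ≤ x 1 ∧ -1 ≤ x 2 ∧ x 2 ≤ 1 ∧
        x 0 + x 1 + x 2 ≤ 1} = Tset := by
      ext p
      simp only [Set.mem_preimage, Set.mem_setOf_eq, Fe_apply0, Fe_apply1, Fe_apply2, Tset]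
    rw [hpre]
    simp only [Fe_apply2]
    rw [← integral_indicator isClosed_Tset.measurableSet, Measure.volume_eq_prod,
      integral_prod _ (by rw [← Measure.volume_eq_prod]; exact integrable_ind)]
    rw [show (fun c : ℝ => ∫ q : ℝ × ℝ, Tset.indicator
        (fun p : ℝ × (ℝ × ℝ) => -(70/97) * p.1 - 15/97) (c, q))
      = fun c : ℝ => (Set.Icc (-1:ℝ) 1).indicator
        (fun c => (-(70/97)*c - 15/97) * ((3-c)^2/2)) c from funext inner_full]
    exact outer
  · rintro x ⟨h1, h2, h3, h4, h5⟩
    rw [hθ]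
    linarith
  · ext x
    simp only [Set.mem_setOf_eq, Set.mem_empty_iff_false, iff_false, not_and, gt_iff_lt, not_lt]
    rintro ⟨h1, h2, h3, h4, h5⟩
    rw [hθ]
    linarith
end

section
/- Let Δ ⊂ ℝ³ be the convex hull of (0,−1,1), (4,−1,−1), (−1,−1,−1), (−1,−1,1), (−1,4,−1), (−1,0,1), and set θ(x) = −(620/349)x₃ − 240/349. Then the set Δ⁻ = {x ∈ Δ : θ(x) ≥ 1} = {x ∈ Δ : −589/349 − (620/349)x₃ ≥ 0} equals the convex hull of the six points (4,−1,−1), (39/10,−1,−19/20), (−1,−1,−19/20), (−1,39/10,−19/20), (−1,−1,−1), (−1,4,−1), and Vol(Δ⁻) = 7351/12000. -/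
open MeasureTheory

lemma tri_meas (c : ℝ) : MeasurableSet {p : ℝ × ℝ | -1 ≤ p.1 ∧ -1 ≤ p.2 ∧ p.1 + p.2 ≤ c} := by
  have : {p : ℝ × ℝ | -1 ≤ p.1 ∧ -1 ≤ p.2 ∧ p.1 + p.2 ≤ c}
      = {p : ℝ × ℝ | -1 ≤ p.1} ∩ ({p | -1 ≤ p.2} ∩ {p | p.1 + p.2 ≤ c}) := rfl
  rw [this]
  exact ((isClosed_le continuous_const continuous_fst).inter
    ((isClosed_le continuous_const continuous_snd).inter
      (isClosed_le (continuous_fst.add continuous_snd) continuous_const))).measurableSet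

lemma tri_area (c : ℝ) (hc : 0 ≤ c) :
    volume {p : ℝ × ℝ | -1 ≤ p.1 ∧ -1 ≤ p.2 ∧ p.1 + p.2 ≤ c} = ENNReal.ofReal ((c+2)^2/2) := by
  rw [Measure.volume_eq_prod, Measure.prod_apply (tri_meas c)]
  have hslice : (fun x => volume (Prod.mk x ⁻¹' {p : ℝ × ℝ | -1 ≤ p.1 ∧ -1 ≤ p.2 ∧ p.1 + p.2 ≤ c}))
      = Set.indicator (Set.Icc (-1:ℝ) (c+1)) (fun x => ENNReal.ofReal (c + 1 - x)) := by
    funext x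
    by_cases hx : -1 ≤ x
    · have h1 : Prod.mk x ⁻¹' {p : ℝ × ℝ | -1 ≤ p.1 ∧ -1 ≤ p.2 ∧ p.1 + p.2 ≤ c}
          = Set.Icc (-1:ℝ) (c - x) := by
        ext y; simp only [Set.mem_preimage, Set.mem_setOf_eq, Set.mem_Icc]
        constructor
        · rintro ⟨_, h2, h3⟩; exact ⟨h2, by linarith⟩
        · rintro ⟨h2, h3⟩; exact ⟨hx, h2, by linarith⟩
      rw [h1, Real.volume_Icc]
      by_cases hx2 : x ≤ c + 1
      · rw [Set.indicator_of_mem (Set.mem_Icc.2 ⟨hx, hx2⟩)]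
        congr 1; ring
      · rw [Set.indicator_of_notMem (by simp [Set.mem_Icc, hx2])]
        rw [ENNReal.ofReal_eq_zero.2 (by linarith)]
    · have h1 : Prod.mk x ⁻¹' {p : ℝ × ℝ | -1 ≤ p.1 ∧ -1 ≤ p.2 ∧ p.1 + p.2 ≤ c} = ∅ := by
        ext y; simp only [Set.mem_preimage, Set.mem_setOf_eq, Set.mem_empty_iff_false, iff_false]
        rintro ⟨h, _, _⟩; exact hx h
      rw [h1, measure_empty, Set.indicator_of_notMem (by simp [Set.mem_Icc]; intro h; linarith)]
  rw [hslice]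
  show (∫⁻ x, (Set.Icc (-1:ℝ) (c+1)).indicator (fun x => ENNReal.ofReal (c + 1 - x)) x) = _
  rw [lintegral_indicator measurableSet_Icc _]
  have hnn : 0 ≤ᵐ[volume.restrict (Set.Icc (-1:ℝ) (c+1))] fun x => c + 1 - x := by
    filter_upwards [ae_restrict_mem measurableSet_Icc] with x hx
    simp only [Set.mem_Icc] at hx; simp only [Pi.zero_apply]; linarith [hx.2]
  have hint : IntegrableOn (fun x => c + 1 - x) (Set.Icc (-1:ℝ) (c+1)) := by
    apply Continuous.integrableOn_Icc; continuity
  rw [← ofReal_integral_eq_lintegral_ofReal hint hnn]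
  congr 1
  rw [MeasureTheory.integral_Icc_eq_integral_Ioc, ← intervalIntegral.integral_of_le (by linarith)]
  have : ∫ x in (-1:ℝ)..(c+1), (c + 1 - x) = (c+1) * ((c+1) - (-1)) - (((c+1)^2 - (-1)^2)/2) := by
    rw [intervalIntegral.integral_sub intervalIntegrable_const intervalIntegral.intervalIntegrable_id,
      intervalIntegral.integral_const, integral_id]
    simp [smul_eq_mul]; ring
  rw [this]; ring

lemma tri2_vol (c : ℝ) (hc : 0 ≤ c) :
    volume {w : Fin 2 → ℝ | -1 ≤ w 0 ∧ -1 ≤ w 1 ∧ w 0 + w 1 ≤ c} = ENNReal.ofReal ((c+2)^2/2) := by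
  have h : {w : Fin 2 → ℝ | -1 ≤ w 0 ∧ -1 ≤ w 1 ∧ w 0 + w 1 ≤ c}
      = MeasurableEquiv.finTwoArrow ⁻¹' {p : ℝ × ℝ | -1 ≤ p.1 ∧ -1 ≤ p.2 ∧ p.1 + p.2 ≤ c} := by
    ext w; simp [MeasurableEquiv.finTwoArrow_apply]
  rw [h, (volume_preserving_finTwoArrow ℝ).measure_preimage_equiv]
  exact tri_area c hc

lemma vol_Sm :
    volume {x : Fin 3 → ℝ | -1 ≤ x 0 ∧ -1 ≤ x 1 ∧ -1 ≤ x 2 ∧ x 2 ≤ -19/20 ∧ x 0 + x 1 + 2 * x 2 ≤ 1}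
      = ENNReal.ofReal (7351/12000) := by
  have hpre : {x : Fin 3 → ℝ | -1 ≤ x 0 ∧ -1 ≤ x 1 ∧ -1 ≤ x 2 ∧ x 2 ≤ -19/20 ∧ x 0 + x 1 + 2 * x 2 ≤ 1}
      = (MeasurableEquiv.piFinSuccAbove (fun _ : Fin 3 => ℝ) 2) ⁻¹'
        {p : ℝ × (Fin 2 → ℝ) | -1 ≤ p.2 0 ∧ -1 ≤ p.2 1 ∧ -1 ≤ p.1 ∧ p.1 ≤ -19/20
          ∧ p.2 0 + p.2 1 + 2 * p.1 ≤ 1} := by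
    ext x
    have h0 : (2 : Fin 3).succAbove 0 = 0 := rfl
    have h1 : (2 : Fin 3).succAbove 1 = 1 := rfl
    simp [MeasurableEquiv.piFinSuccAbove_apply, Fin.removeNth, h0, h1]
  rw [hpre, (volume_preserving_piFinSuccAbove (fun _ : Fin 3 => ℝ) 2).measure_preimage_equiv]
  have hTmeas : MeasurableSet {p : ℝ × (Fin 2 → ℝ) | -1 ≤ p.2 0 ∧ -1 ≤ p.2 1 ∧ -1 ≤ p.1
      ∧ p.1 ≤ -19/20 ∧ p.2 0 + p.2 1 + 2 * p.1 ≤ 1} := by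
    have : {p : ℝ × (Fin 2 → ℝ) | -1 ≤ p.2 0 ∧ -1 ≤ p.2 1 ∧ -1 ≤ p.1
        ∧ p.1 ≤ -19/20 ∧ p.2 0 + p.2 1 + 2 * p.1 ≤ 1}
      = {p : ℝ × (Fin 2 → ℝ) | -1 ≤ p.2 0} ∩ ({p | -1 ≤ p.2 1} ∩ ({p | -1 ≤ p.1} ∩
        ({p | p.1 ≤ -19/20} ∩ {p | p.2 0 + p.2 1 + 2 * p.1 ≤ 1}))) := rfl
    rw [this]
    have c0 : Continuous fun p : ℝ × (Fin 2 → ℝ) => p.2 0 := (continuous_apply 0).comp continuous_snd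
    have c1 : Continuous fun p : ℝ × (Fin 2 → ℝ) => p.2 1 := (continuous_apply 1).comp continuous_snd
    exact ((isClosed_le continuous_const c0).inter ((isClosed_le continuous_const c1).inter
      ((isClosed_le continuous_const continuous_fst).inter
      ((isClosed_le continuous_fst continuous_const).inter
      (isClosed_le (Continuous.add (c0.add c1) (continuous_const.mul continuous_fst))
        continuous_const))))).measurableSet
  rw [Measure.volume_eq_prod, Measure.prod_apply hTmeas]
  have hslice : (fun z => volume (Prod.mk z ⁻¹' {p : ℝ × (Fin 2 → ℝ) | -1 ≤ p.2 0 ∧ -1 ≤ p.2 1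
      ∧ -1 ≤ p.1 ∧ p.1 ≤ -19/20 ∧ p.2 0 + p.2 1 + 2 * p.1 ≤ 1}))
      = Set.indicator (Set.Icc (-1:ℝ) (-19/20)) (fun z => ENNReal.ofReal ((3 - 2*z)^2/2)) := by
    funext z
    by_cases hz : z ∈ Set.Icc (-1:ℝ) (-19/20)
    · obtain ⟨hz1, hz2⟩ := Set.mem_Icc.1 hz
      have h1 : Prod.mk z ⁻¹' {p : ℝ × (Fin 2 → ℝ) | -1 ≤ p.2 0 ∧ -1 ≤ p.2 1
          ∧ -1 ≤ p.1 ∧ p.1 ≤ -19/20 ∧ p.2 0 + p.2 1 + 2 * p.1 ≤ 1}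
          = {w : Fin 2 → ℝ | -1 ≤ w 0 ∧ -1 ≤ w 1 ∧ w 0 + w 1 ≤ 1 - 2*z} := by
        ext w
        simp only [Set.mem_preimage, Set.mem_setOf_eq]
        constructor
        · rintro ⟨a, b, _, _, e⟩; exact ⟨a, b, by linarith⟩
        · rintro ⟨a, b, e⟩; exact ⟨a, b, hz1, hz2, by linarith⟩
      rw [h1, Set.indicator_of_mem hz, tri2_vol _ (by linarith)]
      congr 2; ring
    · have h1 : Prod.mk z ⁻¹' {p : ℝ × (Fin 2 → ℝ) | -1 ≤ p.2 0 ∧ -1 ≤ p.2 1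
          ∧ -1 ≤ p.1 ∧ p.1 ≤ -19/20 ∧ p.2 0 + p.2 1 + 2 * p.1 ≤ 1} = ∅ := by
        ext w
        simp only [Set.mem_preimage, Set.mem_setOf_eq, Set.mem_empty_iff_false, iff_false]
        rintro ⟨_, _, a, b, _⟩
        exact hz (Set.mem_Icc.2 ⟨a, b⟩)
      rw [h1, measure_empty, Set.indicator_of_notMem hz]
  rw [hslice]
  show (∫⁻ z, (Set.Icc (-1:ℝ) (-19/20)).indicator (fun z => ENNReal.ofReal ((3 - 2*z)^2/2)) z) = _
  rw [lintegral_indicator measurableSet_Icc _]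
  have hnn : 0 ≤ᵐ[volume.restrict (Set.Icc (-1:ℝ) (-19/20))] fun z => (3 - 2*z)^2/2 := by
    filter_upwards with z
    simp only [Pi.zero_apply]; positivity
  have hint : IntegrableOn (fun z => (3 - 2*z)^2/2) (Set.Icc (-1:ℝ) (-19/20)) := by
    apply Continuous.integrableOn_Icc; continuity
  rw [← ofReal_integral_eq_lintegral_ofReal hint hnn]
  congr 1
  rw [MeasureTheory.integral_Icc_eq_integral_Ioc,
    ← intervalIntegral.integral_of_le (by norm_num : (-1:ℝ) ≤ -19/20)]
  have hderiv : ∀ z : ℝ, HasDerivAt (fun z : ℝ => -((3 - 2*z)^3/12)) ((3 - 2*z)^2/2) z := by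
    intro z
    have h : HasDerivAt (fun z : ℝ => 3 - 2*z) (-2) z := by
      simpa using ((hasDerivAt_id z).const_mul (2:ℝ)).const_sub 3
    have h3 := (h.fun_pow 3).div_const 12
    have h4 := h3.fun_neg
    refine h4.congr_deriv ?_
    ring
  rw [intervalIntegral.integral_eq_sub_of_hasDerivAt (fun z _ => hderiv z)
    (Continuous.intervalIntegrable (by continuity) _ _)]
  norm_num

lemma hullV_sub_S : convexHull ℝ ({![0, -1, 1], ![4, -1, -1], ![-1, -1, -1],
      ![-1, -1, 1], ![-1, 4, -1], ![-1, 0, 1]} : Set (Fin 3 → ℝ)) ⊆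
    {x : Fin 3 → ℝ | -1 ≤ x 0 ∧ -1 ≤ x 1 ∧ -1 ≤ x 2 ∧ x 0 + x 1 + 2 * x 2 ≤ 1} := by
  apply convexHull_min
  · intro x hx
    simp only [Set.mem_insert_iff, Set.mem_singleton_iff] at hx
    rcases hx with h|h|h|h|h|h <;> subst h <;>
      norm_num [Matrix.cons_val_zero, Matrix.cons_val_one, Matrix.head_cons,
        Matrix.cons_val_two, Matrix.tail_cons]
  · rintro x hx y hy a b ha hb hab
    simp only [Set.mem_setOf_eq, Pi.add_apply, Pi.smul_apply, smul_eq_mul] at *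
    obtain ⟨x0, x1, x2, x3⟩ := hx
    obtain ⟨y0, y1, y2, y3⟩ := hy
    refine ⟨?_, ?_, ?_, ?_⟩ <;>
      nlinarith [mul_le_mul_of_nonneg_left x0 ha, mul_le_mul_of_nonneg_left y0 hb,
        mul_le_mul_of_nonneg_left x1 ha, mul_le_mul_of_nonneg_left y1 hb,
        mul_le_mul_of_nonneg_left x2 ha, mul_le_mul_of_nonneg_left y2 hb,
        mul_le_mul_of_nonneg_left x3 ha, mul_le_mul_of_nonneg_left y3 hb]

lemma Sm_sub_hull : {x : Fin 3 → ℝ | -1 ≤ x 0 ∧ -1 ≤ x 1 ∧ -1 ≤ x 2 ∧ x 2 ≤ -19/20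
      ∧ x 0 + x 1 + 2 * x 2 ≤ 1} ⊆
    convexHull ℝ ({![4, -1, -1], ![39 / 10, -1, -19 / 20], ![-1, -1, -19 / 20],
      ![-1, 39 / 10, -19 / 20], ![-1, -1, -1], ![-1, 4, -1]} : Set (Fin 3 → ℝ)) := by
  rintro x ⟨h0, h1, h2, h3, h4⟩
  have hdpos : (0:ℝ) < 3 - 2 * x 2 := by linarith
  have hdne : (3 - 2 * x 2 : ℝ) ≠ 0 := ne_of_gt hdpos
  have ht0 : (0:ℝ) ≤ 20 * (x 2 + 1) := by linarith
  have ht1 : (20 * (x 2 + 1) : ℝ) ≤ 1 := by linarith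
  have hl1 : (0:ℝ) ≤ x 0 + 1 := by linarith
  have hl2 : (0:ℝ) ≤ x 1 + 1 := by linarith
  have hl3 : (0:ℝ) ≤ 1 - 2 * x 2 - x 0 - x 1 := by linarith
  let w : Fin 6 → ℝ := ![(x 0 + 1)/(3 - 2 * x 2) * (1 - 20 * (x 2 + 1)),
      (x 0 + 1)/(3 - 2 * x 2) * (20 * (x 2 + 1)),
      (1 - 2 * x 2 - x 0 - x 1)/(3 - 2 * x 2) * (20 * (x 2 + 1)),
      (x 1 + 1)/(3 - 2 * x 2) * (20 * (x 2 + 1)),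
      (1 - 2 * x 2 - x 0 - x 1)/(3 - 2 * x 2) * (1 - 20 * (x 2 + 1)),
      (x 1 + 1)/(3 - 2 * x 2) * (1 - 20 * (x 2 + 1))]
  let p : Fin 6 → (Fin 3 → ℝ) := ![![4, -1, -1], ![39 / 10, -1, -19 / 20], ![-1, -1, -19 / 20],
      ![-1, 39 / 10, -19 / 20], ![-1, -1, -1], ![-1, 4, -1]]
  have hw0 : ∀ i ∈ Finset.univ, 0 ≤ w i := by
    intro i _
    fin_cases i
    · exact mul_nonneg (div_nonneg hl1 hdpos.le) (by linarith)
    · exact mul_nonneg (div_nonneg hl1 hdpos.le) (by linarith)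
    · exact mul_nonneg (div_nonneg hl3 hdpos.le) (by linarith)
    · exact mul_nonneg (div_nonneg hl2 hdpos.le) (by linarith)
    · exact mul_nonneg (div_nonneg hl3 hdpos.le) (by linarith)
    · exact mul_nonneg (div_nonneg hl2 hdpos.le) (by linarith)
  have hsum : ∑ i, w i = 1 := by
    rw [Fin.sum_univ_six]
    show (x 0 + 1)/(3 - 2 * x 2) * (1 - 20 * (x 2 + 1))
      + (x 0 + 1)/(3 - 2 * x 2) * (20 * (x 2 + 1))
      + (1 - 2 * x 2 - x 0 - x 1)/(3 - 2 * x 2) * (20 * (x 2 + 1))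
      + (x 1 + 1)/(3 - 2 * x 2) * (20 * (x 2 + 1))
      + (1 - 2 * x 2 - x 0 - x 1)/(3 - 2 * x 2) * (1 - 20 * (x 2 + 1))
      + (x 1 + 1)/(3 - 2 * x 2) * (1 - 20 * (x 2 + 1)) = 1
    field_simp
    ring
  have hpmem : ∀ i ∈ Finset.univ, p i ∈ ({![4, -1, -1], ![39 / 10, -1, -19 / 20],
      ![-1, -1, -19 / 20], ![-1, 39 / 10, -19 / 20], ![-1, -1, -1], ![-1, 4, -1]}
        : Set (Fin 3 → ℝ)) := by
    intro i _
    fin_cases i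
    · exact Set.mem_insert _ _
    · exact Set.mem_insert_of_mem _ (Set.mem_insert _ _)
    · exact Set.mem_insert_of_mem _ (Set.mem_insert_of_mem _ (Set.mem_insert _ _))
    · exact Set.mem_insert_of_mem _ (Set.mem_insert_of_mem _ (Set.mem_insert_of_mem _
        (Set.mem_insert _ _)))
    · exact Set.mem_insert_of_mem _ (Set.mem_insert_of_mem _ (Set.mem_insert_of_mem _
        (Set.mem_insert_of_mem _ (Set.mem_insert _ _))))
    · exact Set.mem_insert_of_mem _ (Set.mem_insert_of_mem _ (Set.mem_insert_of_mem _
        (Set.mem_insert_of_mem _ (Set.mem_insert_of_mem _ rfl))))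
  have hmem := Finset.centerMass_mem_convexHull Finset.univ hw0 (by rw [hsum]; norm_num) hpmem
  rw [Finset.centerMass_eq_of_sum_1 _ _ hsum] at hmem
  have hx : x = ∑ i, w i • p i := by
    funext j
    rw [Finset.sum_apply]
    rw [Fin.sum_univ_six]
    fin_cases j
    · show x 0 = (x 0 + 1)/(3 - 2 * x 2) * (1 - 20 * (x 2 + 1)) * 4
        + (x 0 + 1)/(3 - 2 * x 2) * (20 * (x 2 + 1)) * (39/10)
        + (1 - 2 * x 2 - x 0 - x 1)/(3 - 2 * x 2) * (20 * (x 2 + 1)) * (-1)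
        + (x 1 + 1)/(3 - 2 * x 2) * (20 * (x 2 + 1)) * (-1)
        + (1 - 2 * x 2 - x 0 - x 1)/(3 - 2 * x 2) * (1 - 20 * (x 2 + 1)) * (-1)
        + (x 1 + 1)/(3 - 2 * x 2) * (1 - 20 * (x 2 + 1)) * (-1)
      field_simp
      ring
    · show x 1 = (x 0 + 1)/(3 - 2 * x 2) * (1 - 20 * (x 2 + 1)) * (-1)
        + (x 0 + 1)/(3 - 2 * x 2) * (20 * (x 2 + 1)) * (-1)
        + (1 - 2 * x 2 - x 0 - x 1)/(3 - 2 * x 2) * (20 * (x 2 + 1)) * (-1)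
        + (x 1 + 1)/(3 - 2 * x 2) * (20 * (x 2 + 1)) * (39/10)
        + (1 - 2 * x 2 - x 0 - x 1)/(3 - 2 * x 2) * (1 - 20 * (x 2 + 1)) * (-1)
        + (x 1 + 1)/(3 - 2 * x 2) * (1 - 20 * (x 2 + 1)) * 4
      field_simp
      ring
    · show x 2 = (x 0 + 1)/(3 - 2 * x 2) * (1 - 20 * (x 2 + 1)) * (-1)
        + (x 0 + 1)/(3 - 2 * x 2) * (20 * (x 2 + 1)) * (-19/20)
        + (1 - 2 * x 2 - x 0 - x 1)/(3 - 2 * x 2) * (20 * (x 2 + 1)) * (-19/20)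
        + (x 1 + 1)/(3 - 2 * x 2) * (20 * (x 2 + 1)) * (-19/20)
        + (1 - 2 * x 2 - x 0 - x 1)/(3 - 2 * x 2) * (1 - 20 * (x 2 + 1)) * (-1)
        + (x 1 + 1)/(3 - 2 * x 2) * (1 - 20 * (x 2 + 1)) * (-1)
      field_simp
      rw [eq_div_iff (by linarith)]
      ring
  rw [hx]
  exact hmem

/-- description of Δ⁻ for B₁ and its volume. -/
theorem stmt6 (Δ : Set (Fin 3 → ℝ))
    (hΔ : Δ = convexHull ℝ ({![0, -1, 1], ![4, -1, -1], ![-1, -1, -1],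
      ![-1, -1, 1], ![-1, 4, -1], ![-1, 0, 1]} : Set (Fin 3 → ℝ)))
    (θ : (Fin 3 → ℝ) → ℝ) (hθ : ∀ x, θ x = -(620 / 349) * x 2 - 240 / 349)
    (Δm : Set (Fin 3 → ℝ)) (hΔm : Δm = {x ∈ Δ | 1 ≤ θ x}) :
    Δm = {x ∈ Δ | 0 ≤ -589 / 349 - (620 / 349) * x 2} ∧
    Δm = convexHull ℝ ({![4, -1, -1], ![39 / 10, -1, -19 / 20], ![-1, -1, -19 / 20],
      ![-1, 39 / 10, -19 / 20], ![-1, -1, -1], ![-1, 4, -1]} : Set (Fin 3 → ℝ)) ∧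
    (volume Δm).toReal = 7351 / 12000 := by
  have h1 : Δm ⊆ {x : Fin 3 → ℝ | -1 ≤ x 0 ∧ -1 ≤ x 1 ∧ -1 ≤ x 2 ∧ x 2 ≤ -19/20
      ∧ x 0 + x 1 + 2 * x 2 ≤ 1} := by
    intro x hx
    rw [hΔm] at hx
    obtain ⟨hxΔ, hxθ⟩ := hx
    have hS := hullV_sub_S (hΔ ▸ hxΔ)
    rw [hθ] at hxθ
    exact ⟨hS.1, hS.2.1, hS.2.2.1, by linarith, hS.2.2.2⟩
  have h2 := Sm_sub_hull
  have h3 : convexHull ℝ ({![4, -1, -1], ![39 / 10, -1, -19 / 20], ![-1, -1, -19 / 20],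
      ![-1, 39 / 10, -19 / 20], ![-1, -1, -1], ![-1, 4, -1]} : Set (Fin 3 → ℝ)) ⊆ Δm := by
    rw [hΔm]
    apply convexHull_min
    · have hCH : Convex ℝ (convexHull ℝ ({![0, -1, 1], ![4, -1, -1], ![-1, -1, -1],
        ![-1, -1, 1], ![-1, 4, -1], ![-1, 0, 1]} : Set (Fin 3 → ℝ))) := convex_convexHull ℝ _
      have mA : (![0, -1, 1] : Fin 3 → ℝ) ∈ convexHull ℝ ({![0, -1, 1], ![4, -1, -1],
          ![-1, -1, -1], ![-1, -1, 1], ![-1, 4, -1], ![-1, 0, 1]} : Set (Fin 3 → ℝ)) :=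
        subset_convexHull ℝ _ (by simp)
      have mB : (![4, -1, -1] : Fin 3 → ℝ) ∈ convexHull ℝ ({![0, -1, 1], ![4, -1, -1],
          ![-1, -1, -1], ![-1, -1, 1], ![-1, 4, -1], ![-1, 0, 1]} : Set (Fin 3 → ℝ)) :=
        subset_convexHull ℝ _ (by simp)
      have mC : (![-1, -1, -1] : Fin 3 → ℝ) ∈ convexHull ℝ ({![0, -1, 1], ![4, -1, -1],
          ![-1, -1, -1], ![-1, -1, 1], ![-1, 4, -1], ![-1, 0, 1]} : Set (Fin 3 → ℝ)) :=
        subset_convexHull ℝ _ (by simp)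
      have mD : (![-1, -1, 1] : Fin 3 → ℝ) ∈ convexHull ℝ ({![0, -1, 1], ![4, -1, -1],
          ![-1, -1, -1], ![-1, -1, 1], ![-1, 4, -1], ![-1, 0, 1]} : Set (Fin 3 → ℝ)) :=
        subset_convexHull ℝ _ (by simp)
      have mE : (![-1, 4, -1] : Fin 3 → ℝ) ∈ convexHull ℝ ({![0, -1, 1], ![4, -1, -1],
          ![-1, -1, -1], ![-1, -1, 1], ![-1, 4, -1], ![-1, 0, 1]} : Set (Fin 3 → ℝ)) :=
        subset_convexHull ℝ _ (by simp)
      have mF : (![-1, 0, 1] : Fin 3 → ℝ) ∈ convexHull ℝ ({![0, -1, 1], ![4, -1, -1],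
          ![-1, -1, -1], ![-1, -1, 1], ![-1, 4, -1], ![-1, 0, 1]} : Set (Fin 3 → ℝ)) :=
        subset_convexHull ℝ _ (by simp)
      intro v hv
      simp only [Set.mem_insert_iff, Set.mem_singleton_iff] at hv
      rcases hv with h|h|h|h|h|h <;> subst h <;> rw [hΔ] <;>
        refine ⟨?_, by rw [hθ]; norm_num [Matrix.cons_val_two, Matrix.tail_cons]⟩
      · exact mB
      · have hv1 : ((1/40 : ℝ) • (![0, -1, 1] : Fin 3 → ℝ) + (39/40 : ℝ) • ![4, -1, -1])
            = (![39/10, -1, -19/20] : Fin 3 → ℝ) := by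
          funext j
          fin_cases j
          · show (1/40 : ℝ) * 0 + (39/40 : ℝ) * 4 = 39/10; norm_num
          · show (1/40 : ℝ) * (-1) + (39/40 : ℝ) * (-1) = -1; norm_num
          · show (1/40 : ℝ) * 1 + (39/40 : ℝ) * (-1) = -19/20; norm_num
        exact hv1 ▸ hCH mA mB (by norm_num) (by norm_num) (by norm_num)
      · have hv2 : ((1/40 : ℝ) • (![-1, -1, 1] : Fin 3 → ℝ) + (39/40 : ℝ) • ![-1, -1, -1])
            = (![-1, -1, -19/20] : Fin 3 → ℝ) := by
          funext j
          fin_cases j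
          · show (1/40 : ℝ) * (-1) + (39/40 : ℝ) * (-1) = -1; norm_num
          · show (1/40 : ℝ) * (-1) + (39/40 : ℝ) * (-1) = -1; norm_num
          · show (1/40 : ℝ) * 1 + (39/40 : ℝ) * (-1) = -19/20; norm_num
        exact hv2 ▸ hCH mD mC (by norm_num) (by norm_num) (by norm_num)
      · have hv3 : ((1/40 : ℝ) • (![-1, 0, 1] : Fin 3 → ℝ) + (39/40 : ℝ) • ![-1, 4, -1])
            = (![-1, 39/10, -19/20] : Fin 3 → ℝ) := by
          funext j
          fin_cases j
          · show (1/40 : ℝ) * (-1) + (39/40 : ℝ) * (-1) = -1; norm_num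
          · show (1/40 : ℝ) * 0 + (39/40 : ℝ) * 4 = 39/10; norm_num
          · show (1/40 : ℝ) * 1 + (39/40 : ℝ) * (-1) = -19/20; norm_num
        exact hv3 ▸ hCH mF mE (by norm_num) (by norm_num) (by norm_num)
      · exact mC
      · exact mE
    · have hsep : {x ∈ Δ | 1 ≤ θ x} = Δ ∩ {x : Fin 3 → ℝ | 1 ≤ θ x} := rfl
      rw [hsep]
      refine Convex.inter (hΔ ▸ convex_convexHull ℝ _) ?_
      rintro a ha b hb s u hs hu hsu
      simp only [Set.mem_setOf_eq, hθ, Pi.add_apply, Pi.smul_apply, smul_eq_mul] at *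
      nlinarith [mul_le_mul_of_nonneg_left ha hs, mul_le_mul_of_nonneg_left hb hu]
  have hms : Δm = {x : Fin 3 → ℝ | -1 ≤ x 0 ∧ -1 ≤ x 1 ∧ -1 ≤ x 2 ∧ x 2 ≤ -19/20
      ∧ x 0 + x 1 + 2 * x 2 ≤ 1} := Set.Subset.antisymm h1 (h2.trans h3)
  refine ⟨?_, Set.Subset.antisymm (h1.trans h2) h3, ?_⟩
  · rw [hΔm]
    ext x
    simp only [Set.mem_setOf_eq, hθ]
    constructor
    · rintro ⟨hA, hB⟩; exact ⟨hA, by linarith⟩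
    · rintro ⟨hA, hB⟩; exact ⟨hA, by linarith⟩
  · rw [hms, vol_Sm, ENNReal.toReal_ofReal (by norm_num)]
end

section
/- Let Δ ⊂ ℝ³ be the moment polytope of the toric Fano threefold E₄ (as in Table 2), with E_Δ(i) = (20/3)i³ + 10i² + (16/3)i + 1 and ∫_Δ x dx = (−7/8, 5/12, 5/24), Σ_{a ∈ Δ∩ℤ³} a = (−4, 2, 1), and Σ_{a ∈ Δ∩ℤ³} (θ(a) − θ̄)·a = (−11134272/1816885, 1079424/363377, 539712/363377). Then there is no real number s such that Σ_{a ∈ Δ∩ℤ³} a + s·Σ_{a ∈ Δ∩ℤ³}(θ(a) − θ̄)·a = (E_Δ(1)/Vol(Δ))·∫_Δ x dx, where Vol(Δ) = 20/3 and E_Δ(1) = 22. -/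
/-- the over-determined system (1.7) for E₄ has no solution s. -/
theorem stmt12 :
    ¬ ∃ s : ℝ,
      (![(-4 : ℝ), 2, 1] +
        s • ![(-11134272 / 1816885 : ℝ), 1079424 / 363377, 539712 / 363377])
      = ((22 : ℝ) / (20 / 3)) • ![(-7 / 8 : ℝ), 5 / 12, 5 / 24] := by
  rintro ⟨s, h⟩
  have h0 := congrFun h 0
  have h1 := congrFun h 1
  simp [Matrix.smul_cons] at h0 h1
  nlinarith [h0, h1]
end
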